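/- Fix 0 < p < 1 and let F_p(α) = p²α^{−2} + 2p(2−p) + (2−p)²α² − 4(α^{−p} + α^{2−p} − 1). The equation F_p(α) = 0 has a unique solution α_p in the open interval (0,1). Moreover: (a) F_p(α) > 0 for 0 < α < α_p; (b) F_p(α) < 0 for α_p < α < 1; and (c) α₁ < α_p < α₂, where α₁ is the unique solution in (0,1) of 1 + α² = 2α^p and α₂ = √(p/(2−p)). -/

import Mathlib

/-- The function `F_p(α) = p²α^{-2} + 2p(2-p) + (2-p)²α² - 4(α^{-p} + α^{2-p} - 1)`. -/
noncomputable def Fp (p a : ℝ) : ℝ :=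
  p ^ 2 * a ^ (-2 : ℝ) + 2 * p * (2 - p) + (2 - p) ^ 2 * a ^ 2
    - 4 * (a ^ (-p) + a ^ (2 - p) - 1)

open Real Set

noncomputable def Np (p x : ℝ) : ℝ := p^2 + (2*p*(2-p)+4)*x^2 + (2-p)^2*x^4

noncomputable def Hf (p x : ℝ) : ℝ :=
  (p-2) * Real.log x + Real.log (Np p x) - Real.log (4*(1+x^2))

lemma Np_pos {p : ℝ} (hp0 : 0 < p) (hp1 : p < 1) (x : ℝ) : 0 < Np p x := by
  unfold Np
  have hc : (0:ℝ) ≤ 2*p*(2-p)+4 := by nlinarith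
  have h1 : 0 ≤ (2*p*(2-p)+4)*x^2 := mul_nonneg hc (sq_nonneg x)
  have h2 : 0 ≤ (2-p)^2*x^4 := by positivity
  nlinarith [sq_nonneg p]

lemma rpow_two' {x : ℝ} (hx : 0 < x) : x ^ (2:ℝ) = x ^ 2 := by
  rw [show (2:ℝ) = ((2:ℕ):ℝ) by norm_num, Real.rpow_natCast]

lemma Fp_eq {p x : ℝ} (hx : 0 < x) :
    Fp p x = Np p x / x^2 - 4 * (x ^ (-p) * (1+x^2)) := by
  have h2 : x ^ (2 - p : ℝ) = x^2 * x^(-p) := by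
    rw [show (2 - p : ℝ) = 2 + (-p) by ring, Real.rpow_add hx, rpow_two' hx]
  have hm2 : x ^ (-2 : ℝ) = (x^2)⁻¹ := by
    rw [show (-2 : ℝ) = -(2:ℝ) by norm_num, Real.rpow_neg hx.le, rpow_two' hx]
  unfold Fp Np
  rw [h2, hm2]
  have hx2 : x^2 ≠ 0 := by positivity
  field_simp
  ring
lemma Hf_eq_log {p x : ℝ} (hp0 : 0 < p) (hp1 : p < 1) (hx : 0 < x) :
    Hf p x = Real.log (Np p x / x^2) - Real.log (4 * (x ^ (-p) * (1+x^2))) := by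
  have h1 : (0:ℝ) < 1 + x^2 := by positivity
  have hNp := Np_pos hp0 hp1 x
  rw [Real.log_div hNp.ne' (by positivity), Real.log_mul (by norm_num)
      (by positivity), Real.log_mul (by positivity) h1.ne',
      Real.log_rpow hx]
  unfold Hf
  rw [Real.log_mul (show (4:ℝ) ≠ 0 by norm_num) h1.ne', Real.log_pow]
  push_cast
  ring

lemma sign_pos_iff {p x : ℝ} (hp0 : 0 < p) (hp1 : p < 1) (hx : 0 < x) :
    0 < Fp p x ↔ 0 < Hf p x := by
  have ha : 0 < Np p x / x^2 := div_pos (Np_pos hp0 hp1 x) (by positivity)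
  have hb : 0 < 4 * (x ^ (-p) * (1+x^2)) := by positivity
  rw [Fp_eq hx, Hf_eq_log hp0 hp1 hx, sub_pos, sub_pos, Real.log_lt_log_iff hb ha]

lemma sign_neg_iff {p x : ℝ} (hp0 : 0 < p) (hp1 : p < 1) (hx : 0 < x) :
    Fp p x < 0 ↔ Hf p x < 0 := by
  have ha : 0 < Np p x / x^2 := div_pos (Np_pos hp0 hp1 x) (by positivity)
  have hb : 0 < 4 * (x ^ (-p) * (1+x^2)) := by positivity
  rw [Fp_eq hx, Hf_eq_log hp0 hp1 hx, sub_neg, sub_neg, Real.log_lt_log_iff ha hb]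

lemma sign_eq_iff {p x : ℝ} (hp0 : 0 < p) (hp1 : p < 1) (hx : 0 < x) :
    Fp p x = 0 ↔ Hf p x = 0 := by
  constructor
  · intro h
    rcases lt_trichotomy (Hf p x) 0 with h'|h'|h'
    · exact absurd ((sign_neg_iff hp0 hp1 hx).2 h') (by linarith)
    · exact h'
    · exact absurd ((sign_pos_iff hp0 hp1 hx).2 h') (by linarith)
  · intro h
    rcases lt_trichotomy (Fp p x) 0 with h'|h'|h'
    · have := (sign_neg_iff hp0 hp1 hx).1 h'; linarith
    · exact h'
    · have := (sign_pos_iff hp0 hp1 hx).1 h'; linarith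
lemma Hf_hasDeriv {p x : ℝ} (hp0 : 0 < p) (hp1 : p < 1) (hx : 0 < x) :
    HasDerivAt (Hf p)
      (p*(2-p)*(x^2-1)^2*((2-p)*x^2-p) / (x * Np p x * (1+x^2))) x := by
  have hNp := Np_pos hp0 hp1 x
  have h1 : (0:ℝ) < 1 + x^2 := by positivity
  have d1 : HasDerivAt (fun y : ℝ => (p-2) * Real.log y) ((p-2) * x⁻¹) x :=
    (Real.hasDerivAt_log hx.ne').const_mul (p-2)
  have dN : HasDerivAt (fun y : ℝ => Np p y)
      ((2*p*(2-p)+4)*(2*x) + (2-p)^2*(4*x^3)) x := by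
    have h2 : HasDerivAt (fun y : ℝ => y^2) (2*x) x := by
      simpa using hasDerivAt_pow 2 x
    have h4 : HasDerivAt (fun y : ℝ => y^4) (4*x^3) x := by
      simpa using hasDerivAt_pow 4 x
    have := (((h2.const_mul (2*p*(2-p)+4)).const_add (p^2)).add
      (h4.const_mul ((2-p)^2)))
    simpa [Np, Pi.add_def] using this
  have d2 : HasDerivAt (fun y : ℝ => Real.log (Np p y))
      (((2*p*(2-p)+4)*(2*x) + (2-p)^2*(4*x^3)) / Np p x) x := dN.log hNp.ne'
  have dQ : HasDerivAt (fun y : ℝ => 4*(1+y^2)) (4*(2*x)) x := by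
    have h2 : HasDerivAt (fun y : ℝ => y^2) (2*x) x := by
      simpa using hasDerivAt_pow 2 x
    simpa using (h2.const_add 1).const_mul 4
  have d3 : HasDerivAt (fun y : ℝ => Real.log (4*(1+y^2)))
      ((4*(2*x)) / (4*(1+x^2))) x := dQ.log (by positivity)
  have := (d1.add d2).sub d3
  convert this using 1
  · rfl
  · rfl
  · rfl
  have hNe : Np p x ≠ 0 := hNp.ne'
  field_simp [hNe]
  unfold Np
  ring
lemma a2_mem {p : ℝ} (hp0 : 0 < p) (hp1 : p < 1) : Real.sqrt (p/(2-p)) ∈ Set.Ioo (0:ℝ) 1 := by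
  have h2 : (0:ℝ) < 2 - p := by linarith
  constructor
  · exact Real.sqrt_pos.2 (div_pos hp0 h2)
  · rw [show (1:ℝ) = Real.sqrt 1 by simp]
    apply Real.sqrt_lt_sqrt (by positivity)
    rw [div_lt_one h2]; linarith

lemma Hf_anti {p : ℝ} (hp0 : 0 < p) (hp1 : p < 1) : StrictAntiOn (Hf p) (Set.Ioc 0 (Real.sqrt (p/(2-p)))) := by
  have ha2 := a2_mem hp0 hp1
  apply strictAntiOn_of_deriv_neg (convex_Ioc _ _)
  · intro x hx
    exact (Hf_hasDeriv hp0 hp1 hx.1).continuousAt.continuousWithinAt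
  · intro x hx
    rw [interior_Ioc] at hx
    rw [(Hf_hasDeriv hp0 hp1 hx.1).deriv]
    have hx1 : x < 1 := hx.2.trans ha2.2
    have hxx : x^2 < p/(2-p) := by
      rw [← Real.sq_sqrt (le_of_lt (div_pos hp0 (by linarith)))]
      exact pow_lt_pow_left₀ hx.2 hx.1.le (by norm_num)
    have h2p : (0:ℝ) < 2 - p := by linarith
    have hnum : p*(2-p)*(x^2-1)^2*((2-p)*x^2-p) < 0 := by
      have h1 : (2-p)*x^2 - p < 0 := by
        rw [lt_div_iff₀ h2p] at hxx
        nlinarith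
      have hne : x^2 - 1 ≠ 0 := by nlinarith
      have h2 : 0 < (x^2-1)^2 :=
        lt_of_le_of_ne (sq_nonneg _) (Ne.symm (pow_ne_zero 2 hne))
      exact mul_neg_of_pos_of_neg (mul_pos (mul_pos hp0 h2p) h2) h1
    exact div_neg_of_neg_of_pos hnum
      (mul_pos (mul_pos hx.1 (Np_pos hp0 hp1 x)) (by positivity))

lemma Hf_mono {p : ℝ} (hp0 : 0 < p) (hp1 : p < 1) : StrictMonoOn (Hf p) (Set.Icc (Real.sqrt (p/(2-p))) 1) := by
  have ha2 := a2_mem hp0 hp1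
  apply strictMonoOn_of_deriv_pos (convex_Icc _ _)
  · intro x hx
    exact (Hf_hasDeriv hp0 hp1 (ha2.1.trans_le hx.1)).continuousAt.continuousWithinAt
  · intro x hx
    rw [interior_Icc] at hx
    have hx0 : 0 < x := ha2.1.trans hx.1
    rw [(Hf_hasDeriv hp0 hp1 hx0).deriv]
    have hxx : p/(2-p) < x^2 := by
      rw [← Real.sq_sqrt (le_of_lt (div_pos hp0 (by linarith)))]
      exact pow_lt_pow_left₀ hx.1 (Real.sqrt_nonneg _) (by norm_num)
    have h2p : (0:ℝ) < 2 - p := by linarith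
    have hnum : 0 < p*(2-p)*(x^2-1)^2*((2-p)*x^2-p) := by
      have h1 : 0 < (2-p)*x^2 - p := by
        rw [div_lt_iff₀ h2p] at hxx
        nlinarith
      have hne : x^2 - 1 ≠ 0 := by nlinarith [hx.2, hx0]
      have h2 : 0 < (x^2-1)^2 :=
        lt_of_le_of_ne (sq_nonneg _) (Ne.symm (pow_ne_zero 2 hne))
      exact mul_pos (mul_pos (mul_pos hp0 h2p) h2) h1
    exact div_pos hnum
      (mul_pos (mul_pos hx0 (Np_pos hp0 hp1 x)) (by positivity))

lemma Hf_one {p : ℝ} : Hf p 1 = 0 := by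
  have : Np p 1 = 8 := by unfold Np; ring
  simp [Hf, this]
  norm_num

lemma Hf_small_pos {p x : ℝ} (hp0 : 0 < p) (hp1 : p < 1) (hx0 : 0 < x)
    (hx1 : x < 1)
    (hxe : x ≤ Real.exp ((2*Real.log p - Real.log 8)/(2-p) - 1)) :
    0 < Hf p x := by
  have h2p : (0:ℝ) < 2 - p := by linarith
  have hlx : Real.log x ≤ (2*Real.log p - Real.log 8)/(2-p) - 1 := by
    calc Real.log x ≤ Real.log (Real.exp ((2*Real.log p - Real.log 8)/(2-p) - 1)) :=
          Real.log_le_log hx0 hxe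
    _ = _ := Real.log_exp _
  have h1 : (p-2) * Real.log x ≥ (p-2) * ((2*Real.log p - Real.log 8)/(2-p) - 1) := by
    apply mul_le_mul_of_nonpos_left hlx (by linarith)
  have heq : (p-2) * ((2*Real.log p - Real.log 8)/(2-p) - 1)
      = -(2*Real.log p - Real.log 8) + (2-p) := by
    field_simp
    ring
  have h2 : 2*Real.log p ≤ Real.log (Np p x) := by
    rw [show 2*Real.log p = Real.log (p^2) by rw [Real.log_pow]; push_cast; ring]
    apply Real.log_le_log (by positivity)
    unfold Np
    nlinarith [sq_nonneg x, sq_nonneg (x^2), mul_pos hp0 h2p, sq_nonneg ((2-p)*x^2)]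
  have h3 : Real.log (4*(1+x^2)) ≤ Real.log 8 := by
    apply Real.log_le_log (by positivity)
    nlinarith
  unfold Hf
  linarith [h1, heq ▸ h1]
noncomputable def Df (x : ℝ) : ℝ := 2*x*Real.log x - (1+x)*Real.log ((1+x^2)/2)

noncomputable def D1f (x : ℝ) : ℝ :=
  2*Real.log x + 2 - Real.log ((1+x^2)/2) - 2*x*(1+x)/(1+x^2)

lemma inner_hasDeriv (x : ℝ) : HasDerivAt (fun y : ℝ => (1+y^2)/2) x x := by
  have h2 : HasDerivAt (fun y : ℝ => y^2) (2*x) x := by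
    simpa using hasDerivAt_pow 2 x
  have := (h2.const_add 1).div_const 2
  convert this using 1
  · rfl
  · rfl
  ring

lemma Df_hasDeriv {x : ℝ} (hx : 0 < x) : HasDerivAt Df (D1f x) x := by
  have h1 : (0:ℝ) < 1 + x^2 := by positivity
  have hlog : HasDerivAt (fun y : ℝ => Real.log ((1+y^2)/2))
      (x / ((1+x^2)/2)) x := (inner_hasDeriv x).log (by positivity)
  have hA : HasDerivAt (fun y : ℝ => 2*y*Real.log y) (2*Real.log x + 2) x := by
    have := ((hasDerivAt_id x).mul (Real.hasDerivAt_log hx.ne')).const_mul 2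
    convert this using 1
    · rfl
    · rfl
    · ext y; simp only [Pi.mul_apply, id_eq]; ring
    · simp only [id_eq]; field_simp
  have hB : HasDerivAt (fun y : ℝ => (1+y)*Real.log ((1+y^2)/2))
      (Real.log ((1+x^2)/2) + (1+x)*(x / ((1+x^2)/2))) x := by
    have hy : HasDerivAt (fun y : ℝ => 1+y) 1 x := (hasDerivAt_id x).const_add 1
    simpa [Pi.mul_def] using hy.mul hlog
  have := hA.sub hB
  convert this using 1
  · rfl
  · rfl
  · rfl
  unfold D1f
  field_simp
  ring

lemma D1f_hasDeriv {x : ℝ} (hx : 0 < x) :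
    HasDerivAt D1f (2*(1-x)^2*(1+x)/(x*(1+x^2)^2)) x := by
  have h1 : (0:ℝ) < 1 + x^2 := by positivity
  have hlog : HasDerivAt (fun y : ℝ => Real.log ((1+y^2)/2))
      (x / ((1+x^2)/2)) x := (inner_hasDeriv x).log (by positivity)
  have hA : HasDerivAt (fun y : ℝ => 2*Real.log y + 2) (2*x⁻¹) x :=
    ((Real.hasDerivAt_log hx.ne').const_mul 2).add_const 2
  have hnum : HasDerivAt (fun y : ℝ => 2*y*(1+y)) (2*(1+x) + 2*x) x := by
    have := ((hasDerivAt_id x).mul ((hasDerivAt_id x).const_add 1)).const_mul 2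
    convert this using 1
    · rfl
    · rfl
    · ext y; simp only [Pi.mul_apply, id_eq]; ring
    · simp only [id_eq]; ring
  have hden : HasDerivAt (fun y : ℝ => 1+y^2) (2*x) x := by
    simpa using (hasDerivAt_pow 2 x).const_add 1
  have hC : HasDerivAt (fun y : ℝ => 2*y*(1+y)/(1+y^2))
      (((2*(1+x) + 2*x)*(1+x^2) - 2*x*(1+x)*(2*x))/(1+x^2)^2) x :=
    hnum.div hden h1.ne'
  have := (hA.sub hlog).sub hC
  convert this using 1
  · rfl
  · rfl
  · rfl
  field_simp
  ring

lemma D1f_one : D1f 1 = 0 := by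
  unfold D1f
  norm_num

lemma D1f_neg {x : ℝ} (hx0 : 0 < x) (hx1 : x < 1) : D1f x < 0 := by
  have hmono : StrictMonoOn D1f (Set.Ioc 0 1) := by
    apply strictMonoOn_of_deriv_pos (convex_Ioc _ _)
    · intro y hy
      exact (D1f_hasDeriv hy.1).continuousAt.continuousWithinAt
    · intro y hy
      rw [interior_Ioc] at hy
      rw [(D1f_hasDeriv hy.1).deriv]
      have h1 : (0:ℝ) < (1-y)^2 := by
        have : (1:ℝ) - y ≠ 0 := by nlinarith [hy.2]
        exact lt_of_le_of_ne (sq_nonneg _) (Ne.symm (pow_ne_zero 2 this))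
      have h2 : (0:ℝ) < 1 + y := by nlinarith [hy.1]
      exact div_pos (by nlinarith) (mul_pos hy.1 (by positivity))
  have := hmono (Set.mem_Ioc.2 ⟨hx0, hx1.le⟩) (Set.mem_Ioc.2 ⟨one_pos, le_refl 1⟩) hx1
  rw [D1f_one] at this
  exact this

lemma Df_pos {x : ℝ} (hx0 : 0 < x) (hx1 : x < 1) : 0 < Df x := by
  have hanti : StrictAntiOn Df (Set.Ioc 0 1) := by
    apply strictAntiOn_of_deriv_neg (convex_Ioc _ _)
    · intro y hy
      exact (Df_hasDeriv hy.1).continuousAt.continuousWithinAt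
    · intro y hy
      rw [interior_Ioc] at hy
      rw [(Df_hasDeriv hy.1).deriv]
      exact D1f_neg hy.1 hy.2
  have := hanti (Set.mem_Ioc.2 ⟨hx0, hx1.le⟩) (Set.mem_Ioc.2 ⟨one_pos, le_refl 1⟩) hx1
  have hD1 : Df 1 = 0 := by unfold Df; norm_num
  rw [hD1] at this
  exact this

lemma a1_lt {p x : ℝ} (hp0 : 0 < p) (hp1 : p < 1) (hx0 : 0 < x) (hx1 : x < 1)
    (heq : 1 + x ^ 2 = 2 * x ^ p) : (2-p) * x < p := by
  have hlx : Real.log x < 0 := Real.log_neg hx0 hx1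
  have hkey : Real.log ((1+x^2)/2) = p * Real.log x := by
    rw [heq, mul_comm (2:ℝ), mul_div_assoc]
    norm_num
    rw [Real.log_rpow hx0]
  have hD := Df_pos hx0 hx1
  unfold Df at hD
  rw [hkey] at hD
  -- 2x log x - (1+x) p log x > 0, log x < 0 ⟹ 2x - p(1+x) < 0
  nlinarith [mul_pos (neg_pos.2 hlx) hD]
lemma Fp_a1_pos {p x : ℝ} (hp0 : 0 < p) (hp1 : p < 1) (hx0 : 0 < x) (hx1 : x < 1)
    (heq : 1 + x ^ 2 = 2 * x ^ p) : 0 < Fp p x := by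
  have hlt := a1_lt hp0 hp1 hx0 hx1 heq
  have hrp : x ^ (-p) * (1 + x^2) = 2 := by
    rw [heq, ← mul_assoc, mul_comm (x ^ (-p)) 2, mul_assoc, ← Real.rpow_add hx0]
    norm_num
  rw [Fp_eq hx0, hrp]
  have hkey : Np p x - 8 * x^2 = (x^2 - 1) * ((2-p)^2 * x^2 - p^2) := by
    unfold Np; ring
  have h1 : (2-p)^2 * x^2 - p^2 < 0 := by
    have h2p : (0:ℝ) < 2 - p := by linarith
    have ha : 0 < (2-p)*x := mul_pos h2p hx0
    nlinarith [mul_pos (sub_pos.2 hlt) (show (0:ℝ) < (2-p)*x + p by linarith)]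
  have h2 : x^2 - 1 < 0 := by nlinarith
  have h3 : 0 < Np p x - 8 * x^2 := by rw [hkey]; exact mul_pos_of_neg_of_neg h2 h1
  have hx2 : (0:ℝ) < x^2 := by positivity
  have h4 : (8:ℝ) < Np p x / x^2 := by
    rw [lt_div_iff₀ hx2]
    linarith
  linarith

theorem Fp_unique_zero' (p a1 : ℝ) (hp0 : 0 < p) (hp1 : p < 1)
    (ha1 : a1 ∈ Set.Ioo (0 : ℝ) 1) (ha1eq : 1 + a1 ^ 2 = 2 * a1 ^ p) :
    ∃ ap ∈ Set.Ioo (0 : ℝ) 1, Fp p ap = 0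
      ∧ (∀ x ∈ Set.Ioo (0 : ℝ) 1, Fp p x = 0 → x = ap)
      ∧ (∀ a, 0 < a → a < ap → 0 < Fp p a)
      ∧ (∀ a, ap < a → a < 1 → Fp p a < 0)
      ∧ a1 < ap ∧ ap < Real.sqrt (p / (2 - p)) := by
  set s := Real.sqrt (p / (2 - p)) with hs
  have hsm := a2_mem hp0 hp1
  rw [← hs] at hsm
  have hanti := Hf_anti hp0 hp1
  have hmono := Hf_mono hp0 hp1
  rw [← hs] at hanti hmono
  have hH1 : Hf p 1 = 0 := Hf_one
  -- Hf p s < 0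
  have hHs : Hf p s < 0 := by
    have := hmono (Set.mem_Icc.2 ⟨le_refl s, hsm.2.le⟩)
      (Set.mem_Icc.2 ⟨hsm.2.le, le_refl 1⟩) hsm.2
    rwa [hH1] at this
  -- small point
  set x0 := min (Real.exp ((2*Real.log p - Real.log 8)/(2-p) - 1)) (s/2) with hx0def
  have hx0pos : 0 < x0 := lt_min (Real.exp_pos _) (by linarith [hsm.1])
  have hx0lt_s : x0 < s := (min_le_right _ _).trans_lt (by linarith [hsm.1])
  have hx0lt1 : x0 < 1 := hx0lt_s.trans hsm.2
  have hHx0 : 0 < Hf p x0 :=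
    Hf_small_pos hp0 hp1 hx0pos hx0lt1 (min_le_left _ _)
  -- IVT on [x0, s]
  have hcont : ContinuousOn (Hf p) (Set.Icc x0 s) := by
    intro y hy
    exact (Hf_hasDeriv hp0 hp1 (hx0pos.trans_le hy.1)).continuousAt.continuousWithinAt
  have hivt := intermediate_value_Icc' hx0lt_s.le hcont
  have h0mem : (0:ℝ) ∈ Set.Icc (Hf p s) (Hf p x0) := ⟨hHs.le, hHx0.le⟩
  obtain ⟨ap, hapmem, hapH⟩ := hivt h0mem
  have hap0 : 0 < ap := hx0pos.trans_le hapmem.1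
  have haps : ap < s := lt_of_le_of_ne hapmem.2 (fun h => by rw [← h, hapH] at hHs; exact lt_irrefl 0 hHs)
  have hap1 : ap < 1 := haps.trans hsm.2
  have hapIoo : ap ∈ Set.Ioo (0:ℝ) 1 := ⟨hap0, hap1⟩
  -- sign claims
  have hsign_lt : ∀ a, 0 < a → a < ap → 0 < Fp p a := by
    intro a ha0 ha
    rw [sign_pos_iff hp0 hp1 ha0]
    have := hanti (Set.mem_Ioc.2 ⟨ha0, (ha.trans haps).le⟩)
      (Set.mem_Ioc.2 ⟨hap0, haps.le⟩) ha
    rwa [hapH] at this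
  have hsign_gt : ∀ a, ap < a → a < 1 → Fp p a < 0 := by
    intro a ha ha1'
    have ha0 : 0 < a := hap0.trans ha
    rw [sign_neg_iff hp0 hp1 ha0]
    rcases le_or_gt a s with hle | hlt
    · have := hanti (Set.mem_Ioc.2 ⟨hap0, haps.le⟩) (Set.mem_Ioc.2 ⟨ha0, hle⟩) ha
      rwa [hapH] at this
    · have := hmono (Set.mem_Icc.2 ⟨hlt.le, ha1'.le⟩)
        (Set.mem_Icc.2 ⟨hsm.2.le, le_refl 1⟩) ha1'
      rwa [hH1] at this
  refine ⟨ap, hapIoo, (sign_eq_iff hp0 hp1 hap0).2 hapH, ?_, hsign_lt, hsign_gt, ?_, haps⟩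
  · intro x hx hFx
    rcases lt_trichotomy x ap with h | h | h
    · exact absurd hFx (ne_of_gt (hsign_lt x hx.1 h))
    · exact h
    · exact absurd hFx (ne_of_lt (hsign_gt x h hx.2))
  · -- a1 < ap
    by_contra hcon
    push_neg at hcon
    rcases eq_or_lt_of_le hcon with h | h
    · have h0 := (sign_eq_iff hp0 hp1 hap0).2 hapH
      rw [h] at h0
      have := Fp_a1_pos hp0 hp1 ha1.1 ha1.2 ha1eq
      linarith
    · have := hsign_gt a1 h ha1.2
      have h2 := Fp_a1_pos hp0 hp1 ha1.1 ha1.2 ha1eq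
      linarith

theorem Fp_unique_zero (p a1 : ℝ) (hp0 : 0 < p) (hp1 : p < 1)
    (ha1 : a1 ∈ Set.Ioo (0 : ℝ) 1) (ha1eq : 1 + a1 ^ 2 = 2 * a1 ^ p) :
    ∃ ap ∈ Set.Ioo (0 : ℝ) 1, Fp p ap = 0
      ∧ (∀ x ∈ Set.Ioo (0 : ℝ) 1, Fp p x = 0 → x = ap)
      ∧ (∀ a, 0 < a → a < ap → 0 < Fp p a)
      ∧ (∀ a, ap < a → a < 1 → Fp p a < 0)
      ∧ a1 < ap ∧ ap < Real.sqrt (p / (2 - p)) := Fp_unique_zero' p a1 hp0 hp1 ha1 ha1eq
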